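/- Let 𝒢 be a GRN with associated PRN ℛ, and let ρ, ρ′ be super-simple nodes of 𝒢 such that on some ιo-simple path of 𝒢 the node ρ appears strictly before ρ′. Then on every ι^R o^P-simple path of ℛ the four nodes (ρ,R), (ρ,P), (ρ′,R), (ρ′,P) all appear, and they appear in the order (ρ,R), then (ρ,P), then (ρ′,R), then (ρ′,P). -/

import Mathlib

open List Relation

/- In the PRN on `V × Bool`, the node `(v, false)` is the mRNA node `v^R`
   and `(v, true)` is the protein node `v^P`. -/

/-- Arrow relation of the PRN associated to a GRN with arrow relation `E`:
arrows `(v,R) → (v,P)` for every `v`, and `(u,P) → (v,R)` whenever `E u v`. -/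
def prnAdj {V : Type*} (E : V → V → Prop) : V × Bool → V × Bool → Prop :=
  fun a b =>
    (a.1 = b.1 ∧ a.2 = false ∧ b.2 = true) ∨
    (E a.1 b.1 ∧ a.2 = true ∧ b.2 = false)

/-- The lift of a path `σ₁ → ⋯ → σ_m` in the GRN to the path
`(σ₁,R) → (σ₁,P) → ⋯ → (σ_m,R) → (σ_m,P)` in the PRN. -/
def liftPath {V : Type*} (l : List V) : List (V × Bool) :=
  l.flatMap fun v => [(v, false), (v, true)]

/-- A simple path: a nonempty directed path visiting each node at most once. -/
def IsSimplePath {V : Type*} (E : V → V → Prop) (l : List V) : Prop :=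
  l ≠ [] ∧ l.Chain' E ∧ l.Nodup

/-- A simple path from `a` to `b`. -/
def IsSimplePathFrom {V : Type*} (E : V → V → Prop) (a b : V) (l : List V) : Prop :=
  IsSimplePath E l ∧ l.head? = some a ∧ l.getLast? = some b

/-- A node is simple if it lies on some simple path from the input to the output. -/
def IsSimpleNode {V : Type*} (E : V → V → Prop) (ι o v : V) : Prop :=
  ∃ l, IsSimplePathFrom E ι o l ∧ v ∈ l

/-- A node is super-simple if it lies on every simple path from the input to the output. -/
def IsSuperSimpleNode {V : Type*} (E : V → V → Prop) (ι o v : V) : Prop :=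
  ∀ l, IsSimplePathFrom E ι o l → v ∈ l

/-- A node is appendage if it lies on no simple path from the input to the output. -/
def IsAppendageNode {V : Type*} (E : V → V → Prop) (ι o v : V) : Prop :=
  ¬ IsSimpleNode E ι o v

/-- An appendage path from `a` to `b`: a simple path from `a` to `b` each of whose
nodes, except possibly `a` and `b`, is an appendage node. -/
def IsAppendagePath {V : Type*} (E : V → V → Prop) (ι o a b : V) (l : List V) : Prop :=
  IsSimplePathFrom E a b l ∧ ∀ v ∈ l, v ≠ a → v ≠ b → IsAppendageNode E ι o v

/-- A directed cycle: a nonempty closed directed walk visiting each of its nodes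
exactly once (a self-loop is a cycle of length one). -/
def IsCycle {V : Type*} (E : V → V → Prop) (c : List V) : Prop :=
  c ≠ [] ∧ c.Chain' E ∧ c.Nodup ∧
    ∃ a b, c.head? = some a ∧ c.getLast? = some b ∧ E b a

/-- Arrow relation of the appendage subnetwork: the induced subgraph on appendage nodes. -/
def appendageAdj {V : Type*} (E : V → V → Prop) (ι o : V) : V → V → Prop :=
  fun a b => E a b ∧ IsAppendageNode E ι o a ∧ IsAppendageNode E ι o b

/-- Two appendage nodes are path-equivalent if each is reachable from the other by a
directed path lying entirely within the appendage subnetwork. -/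
def PathEquiv {V : Type*} (E : V → V → Prop) (ι o a b : V) : Prop :=
  Relation.ReflTransGen (appendageAdj E ι o) a b ∧
  Relation.ReflTransGen (appendageAdj E ι o) b a

/-- A node `x` is between `a` and `b` if some input-to-output simple path visits
`a`, `x`, `b` in that order. -/
def Between {V : Type*} (E : V → V → Prop) (ι o a x b : V) : Prop :=
  ∃ l, IsSimplePathFrom E ι o l ∧ [a, x, b].Sublist l

section Aux
variable {V : Type*}

lemma liftPath_cons (a : V) (l : List V) :
    liftPath (a :: l) = (a, false) :: (a, true) :: liftPath l := by
  simp [liftPath]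

lemma liftPath_nil : liftPath ([] : List V) = [] := by simp [liftPath]

lemma pair_sublist {a b : V} {l : List V} (h : [a, b] <+ l) :
    ∃ p q r, l = p ++ a :: q ++ b :: r := by
  obtain ⟨r₁, r₂, rfl, ha, hb⟩ := cons_sublist_iff.mp h
  obtain ⟨s, t, rfl⟩ := append_of_mem ha
  obtain ⟨u, w, rfl⟩ := append_of_mem (singleton_sublist.mp hb)
  exact ⟨s, t ++ u, w, by simp⟩

lemma two_mem_sublist {a b : V} {l : List V} (ha : a ∈ l) (hb : b ∈ l) (hne : a ≠ b) :
    [a, b] <+ l ∨ [b, a] <+ l := by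
  obtain ⟨s, t, rfl⟩ := append_of_mem ha
  rcases mem_append.mp hb with h | h
  · right
    have := Sublist.append (singleton_sublist.mpr h)
      (singleton_sublist.mpr (mem_cons_self (a := a) (l := t)))
    simpa using this
  · rcases mem_cons.mp h with rfl | h
    · exact absurd rfl hne
    · left
      refine Sublist.trans ?_ (sublist_append_right s _)
      exact cons_sublist_cons.mpr (singleton_sublist.mpr h)

lemma exists_simple_of_chain (E : V → V → Prop) :
    ∀ n (l : List V), l.length ≤ n → l.Chain' E →
      ∃ m : List V, m.Chain' E ∧ m.Nodup ∧ m.head? = l.head? ∧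
        m.getLast? = l.getLast? ∧ ∀ x ∈ m, x ∈ l := by
  intro n
  induction n with
  | zero =>
    intro l hl _
    cases l with
    | nil => exact ⟨[], isChain_nil, by simp⟩
    | cons a l => simp at hl
  | succ n ih =>
    intro l hlen hc
    by_cases hnd : l.Nodup
    · exact ⟨l, hc, hnd, rfl, rfl, fun x hx => hx⟩
    · obtain ⟨x, hx⟩ := exists_duplicate_iff_not_nodup.mpr hnd
      rw [duplicate_iff_sublist] at hx
      obtain ⟨p, q, r, rfl⟩ := pair_sublist hx
      have hcp := isChain_append.mp (show Chain' E (p ++ x :: (q ++ x :: r)) by simpa using hc)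
      have hsuf : Chain' E (x :: r) := hc.suffix ⟨p ++ x :: q, by simp⟩
      have hW : Chain' E (p ++ x :: r) :=
        IsChain.append hcp.1 hsuf (fun y hy z hz => by
          simp only [head?_cons, Option.mem_def, Option.some.injEq] at hz
          subst hz
          exact hcp.2.2 y hy x (by simp))
      have hlen' : (p ++ x :: r).length ≤ n := by
        simp only [length_append, length_cons] at hlen ⊢
        omega
      obtain ⟨m, hmc, hmn, hmh, hml, hms⟩ := ih (p ++ x :: r) hlen' hW
      refine ⟨m, hmc, hmn, ?_, ?_, ?_⟩
      · rw [hmh]; cases p <;> simp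
      · rw [hml, getLast?_append_cons,
          show p ++ x :: q ++ x :: r = (p ++ x :: q) ++ x :: r by simp,
          getLast?_append_cons]
      · intro y hy
        have := hms y hy
        simp only [mem_append, mem_cons] at this ⊢
        tauto

lemma lift_of_chain (E : V → V → Prop) :
    ∀ n (L : List (V × Bool)) (a b : V), L.length ≤ n → L.Chain' (prnAdj E) →
      L.head? = some (a, false) → L.getLast? = some (b, true) →
      ∃ l : List V, L = liftPath l ∧ l.Chain' E ∧ l.head? = some a ∧ l.getLast? = some b := by
  intro n
  induction n with
  | zero =>
    intro L a b hlen _ hh _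
    cases L with
    | nil => simp at hh
    | cons x L => simp at hlen
  | succ n ih =>
    intro L a b hlen hc hh hl
    cases L with
    | nil => simp at hh
    | cons x L' =>
      have hx : x = (a, false) := by simpa using hh
      subst hx
      cases L' with
      | nil => simp [List.getLast?] at hl
      | cons y L'' =>
        simp only [Chain', isChain_cons_cons] at hc
        obtain ⟨h1, hc'⟩ := hc
        obtain ⟨v, c⟩ := y
        rcases h1 with ⟨h1a, -, h1c⟩ | ⟨-, h1b, -⟩
        · obtain rfl : a = v := h1a
          obtain rfl : c = true := h1c
          cases L'' with
          | nil =>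
            obtain rfl : a = b := by simpa using hl
            exact ⟨[a], by simp [liftPath], isChain_singleton a, rfl, rfl⟩
          | cons z M =>
            rw [isChain_cons_cons] at hc'
            obtain ⟨h2, hc''⟩ := hc'
            obtain ⟨w, d⟩ := z
            rcases h2 with ⟨-, h2b, -⟩ | ⟨h2a, -, h2c⟩
            · exact absurd h2b (by simp)
            · obtain rfl : d = false := h2c
              have h2a' : E a w := h2a
              have hl' : ((w, false) :: M).getLast? = some (b, true) := by
                rw [show (a, false) :: (a, true) :: (w, false) :: M
                    = [(a, false), (a, true)] ++ (w, false) :: M from rfl,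
                  getLast?_append_cons] at hl
                exact hl
              have hlen' : ((w, false) :: M).length ≤ n := by
                simp only [length_cons] at hlen ⊢; omega
              obtain ⟨l', hL, hcl, hhl, hll⟩ := ih ((w, false) :: M) w b hlen' hc'' rfl hl'
              refine ⟨a :: l', ?_, ?_, rfl, ?_⟩
              · rw [liftPath_cons, hL]
              · show IsChain E (a :: l'); rw [isChain_cons]
                exact ⟨fun z hz => by
                  rw [hhl] at hz
                  simp only [Option.mem_def, Option.some.injEq] at hz
                  subst hz; exact h2a', hcl⟩
              · cases l' with
                | nil => simp at hhl
                | cons u t =>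
                  rw [show a :: u :: t = [a] ++ u :: t from rfl, getLast?_append_cons]
                  exact hll
        · exact absurd h1b (by simp)

lemma map_false_sublist (l : List V) :
    l.map (fun v => (v, false)) <+ liftPath l := by
  induction l with
  | nil => simp [liftPath]
  | cons a l ih =>
    rw [liftPath_cons, map_cons]
    exact (ih.cons _).cons₂ _

lemma liftPath_sublist {l₁ l₂ : List V} (h : l₁ <+ l₂) :
    liftPath l₁ <+ liftPath l₂ := by
  induction h with
  | slnil => simp [liftPath]
  | cons a h ih => rw [liftPath_cons]; exact (ih.cons _).cons _
  | cons_cons a h ih => rw [liftPath_cons, liftPath_cons]; exact (ih.cons₂ _).cons₂ _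

end Aux

section Aux2
variable {V : Type*}

lemma order_unique (E : V → V → Prop) (ι o ρ ρ' : V)
    (hρ : IsSuperSimpleNode E ι o ρ) (hρ' : IsSuperSimpleNode E ι o ρ')
    (horder : ∃ l, IsSimplePathFrom E ι o l ∧ [ρ, ρ'].Sublist l)
    (l : List V) (hl : IsSimplePathFrom E ι o l) : [ρ, ρ'] <+ l := by
  obtain ⟨l₀, hl₀, h₀⟩ := horder
  have hne : ρ ≠ ρ' := by
    rintro rfl
    exact (not_nodup_pair ρ) (hl₀.1.2.2.sublist h₀)
  have hmem : ρ ∈ l := hρ l hl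
  have hmem' : ρ' ∈ l := hρ' l hl
  rcases two_mem_sublist hmem hmem' hne with h | h
  · exact h
  · exfalso
    obtain ⟨p, q, r, rfl⟩ := pair_sublist h₀
    obtain ⟨p', q', r', rfl⟩ := pair_sublist h
    obtain ⟨⟨-, hc₀, hn₀⟩, hh₀, hg₀⟩ := hl₀
    obtain ⟨⟨-, hc, hn⟩, hh, hg⟩ := hl
    have hcp := isChain_append.mp (show Chain' E (p ++ ρ :: (q ++ ρ' :: r)) by simpa using hc₀)
    have hsuf : Chain' E (ρ :: r') := hc.suffix ⟨p' ++ ρ' :: q', by simp⟩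
    have hW : Chain' E (p ++ ρ :: r') :=
      IsChain.append hcp.1 hsuf (fun x hx y hy => by
        simp only [head?_cons, Option.mem_def, Option.some.injEq] at hy
        subst hy
        exact hcp.2.2 x hx ρ (by simp))
    have hWh : (p ++ ρ :: r').head? = some ι := by
      cases p with
      | nil => simpa using hh₀
      | cons a p => simpa using hh₀
    have hWl : (p ++ ρ :: r').getLast? = some o := by
      rw [getLast?_append_cons]
      rw [show p' ++ ρ' :: q' ++ ρ :: r' = (p' ++ ρ' :: q') ++ ρ :: r' by simp,
        getLast?_append_cons] at hg
      exact hg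
    obtain ⟨m, hmc, hmn, hmh, hml, hms⟩ :=
      exists_simple_of_chain E (p ++ ρ :: r').length (p ++ ρ :: r') le_rfl hW
    have hmne : m ≠ [] := by
      intro h; rw [h] at hmh; rw [hWh] at hmh; simp at hmh
    have hmem'' : ρ' ∈ m :=
      hρ' m ⟨⟨hmne, hmc, hmn⟩, hmh.trans hWh, hml.trans hWl⟩
    have hρ'W : ρ' ∈ p ++ ρ :: r' := hms ρ' hmem''
    -- ρ' ∉ p
    have hnp : ρ' ∉ p := by
      have hd := (nodup_append.mp (show ((p ++ ρ :: (q ++ ρ' :: r)) : List V).Nodup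
        by simpa using hn₀)).2.2
      intro hin
      exact hd _ hin _ (by simp) rfl
    -- ρ' ∉ r'
    have hnr : ρ' ∉ r' := by
      have hn' : (p' ++ (ρ' :: (q' ++ ρ :: r'))).Nodup := by simpa using hn
      have hsub : (ρ' :: (q' ++ ρ :: r')).Nodup :=
        hn'.sublist (sublist_append_right p' _)
      have := (nodup_cons.mp hsub).1
      intro hin
      exact this (by simp [hin])
    rcases mem_append.mp hρ'W with h' | h'
    · exact hnp h'
    · rcases mem_cons.mp h' with h'' | h''
      · exact hne h''.symm
      · exact hnr h''
  end Aux2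

/-- If `ρ`, `ρ'` are super-simple nodes of the GRN and `ρ` appears
strictly before `ρ'` on some `ιo`-simple path, then on every `ι^R o^P`-simple path of
the PRN the nodes `(ρ,R), (ρ,P), (ρ',R), (ρ',P)` all appear, in that order. -/
theorem stmt_7 {V : Type*} [Fintype V] (E : V → V → Prop) (ι o ρ ρ' : V)
    (hρ : IsSuperSimpleNode E ι o ρ) (hρ' : IsSuperSimpleNode E ι o ρ')
    (horder : ∃ l, IsSimplePathFrom E ι o l ∧ [ρ, ρ'].Sublist l) :
    ∀ L : List (V × Bool), IsSimplePathFrom (prnAdj E) (ι, false) (o, true) L →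
      [(ρ, false), (ρ, true), (ρ', false), (ρ', true)].Sublist L := by
  intro L hL
  obtain ⟨⟨hne, hch, hnd⟩, hh, hl⟩ := hL
  obtain ⟨l, rfl, hcl, hhl, hll⟩ := lift_of_chain E L.length L ι o le_rfl hch hh hl
  have hnl : l.Nodup := ((hnd.sublist (map_false_sublist l))).of_map _
  have hlne : l ≠ [] := by rintro rfl; simp at hhl
  have hsp : IsSimplePathFrom E ι o l := ⟨⟨hlne, hcl, hnl⟩, hhl, hll⟩
  have hkey := order_unique E ι o ρ ρ' hρ hρ' horder l hsp
  have := liftPath_sublist hkey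
  simpa [liftPath] using this
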